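/- Let c be an admissible coefficient function satisfying (Cubic values). Let i_1, i_2, i_3 ∈ {1,2,3} be pairwise distinct with a_{i_1} ≥ 3 and a_{i_2} = 2. Let γ ∈ ℤ^{μ_A−2} be non-negative with |γ| = 4, γ_{i_3,j_3} = 0 for all j_3 ≥ 1, and γ − e_{i_1,j_1} − 2e_{i_2,1} ≥ 0 for some j_1 ≥ 2. Then c(γ,0) = 0. -/

import Mathlib

/- Common framework: Frobenius manifolds for orbifold projective lines ℙ¹_A,
   following Ishibashi–Shiraishi–Takahashi. -/

namespace FrobeniusUniqueness

/-- A point index `(i, j)` labelling a flat coordinate `t_{i,j}`. -/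
abbrev Pt : Type := Fin 3 × ℕ

/-- A non-negative element of `ℤ^{μ_A − 2}`: an exponent vector `α` with `α_{i,j} ∈ ℕ`. -/
abbrev Expv : Type := Pt →₀ ℕ

/-- The standard basis vector `e_{i,j}`. -/
noncomputable def e (i : Fin 3) (j : ℕ) : Expv := Finsupp.single (i, j) 1

/-- The length `|α|` of an exponent vector. -/
def len (α : Expv) : ℕ := α.sum fun _ n => n

/-- A point index `(i,j)` is valid if `1 ≤ j ≤ a_i − 1`. -/
def ValidPt (A : Fin 3 → ℕ) (p : Pt) : Prop := 1 ≤ p.2 ∧ p.2 ≤ A p.1 - 1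

/-- An exponent vector lies in `ℤ^{μ_A − 2}` iff it is supported on valid indices. -/
def Valid (A : Fin 3 → ℕ) (α : Expv) : Prop := ∀ p ∈ α.support, ValidPt A p

/-- The combinatorial factor `s_{a,b,c}`. -/
def sFactor (a b c : ℕ) : ℂ :=
  if a = b ∧ b = c then 6
  else if a ≠ b ∧ b ≠ c ∧ a ≠ c then 1
  else 2

/-- The index type for the flat coordinates `t_1`, `t_{i,j}`, `t_{μ_A}`. -/
inductive Idx : Type where
  | one : Idx
  | pt : Fin 3 → ℕ → Idx
  | mu : Idx
deriving DecidableEq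

/-- Validity of a flat coordinate index. -/
def ValidIdx (A : Fin 3 → ℕ) : Idx → Prop
  | .one => True
  | .pt i j => ValidPt A (i, j)
  | .mu => True

/-- The metric `η` in the frame `∂_1, ∂_{i,j}, ∂_{μ_A}`. -/
noncomputable def eta (A : Fin 3 → ℕ) : Idx → Idx → ℂ
  | .one, .mu => 1
  | .mu, .one => 1
  | .pt i j, .pt i' j' =>
      if i = i' ∧ j + j' = A i ∧ 1 ≤ j ∧ j ≤ A i - 1 then (A i : ℂ)⁻¹ else 0
  | _, _ => 0

/-- The point indices occurring in an `Idx`. -/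
def ptsOf : Idx → List Pt
  | .pt i j => [(i, j)]
  | _ => []

/-- The number of occurrences of `μ_A` in an `Idx`. -/
def muCount : Idx → ℕ
  | .mu => 1
  | _ => 0

/-- The factor produced when the monomial `t^{β + Σ_{p ∈ ps} e_p}` is differentiated by
`∏_{p ∈ ps} ∂_p`, leaving the monomial `t^β`. -/
noncomputable def dfac (β : Expv) : List Pt → ℕ
  | [] => 1
  | p :: ps =>
      ((β + ((ps.map fun q => (Finsupp.single q 1 : Expv)).sum) + Finsupp.single p 1 : Expv) p)
        * dfac β ps

/-- `der A c a b d β m` is the coefficient of `t^β · e^{m·t_{μ_A}}` in `∂_a ∂_b ∂_d F`, where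
`F = (1/2)t_1²t_{μ_A} + (1/2)t_1·Σ_{i,j}(1/a_i)t_{i,j}t_{i,a_i−j} + Σ_{α,m} c(α,m)t^α e^{m t_{μ_A}}`
is the potential of the coefficient function `c`.  In particular `∂_1∂_a∂_b F = η(∂_a,∂_b)`. -/
noncomputable def der (A : Fin 3 → ℕ) (c : Expv → ℕ → ℂ) (a b d : Idx) (β : Expv) (m : ℕ) : ℂ :=
  if a = .one then (if β = 0 ∧ m = 0 then eta A b d else 0)
  else if b = .one then (if β = 0 ∧ m = 0 then eta A a d else 0)
  else if d = .one then (if β = 0 ∧ m = 0 then eta A a b else 0)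
  else
    (m : ℂ) ^ (muCount a + muCount b + muCount d) *
      (dfac β (ptsOf a ++ ptsOf b ++ ptsOf d) : ℂ) *
      c (β + (((ptsOf a ++ ptsOf b ++ ptsOf d).map fun q => (Finsupp.single q 1 : Expv)).sum)) m

/-- The coefficient of `t^β · e^{m·t_{μ_A}}` in
`Σ_{σ,τ} ∂_a∂_b∂_σF · η^{στ} · ∂_τ∂_d∂_e F`, where `(η^{στ})` is the inverse matrix of
`(η_{στ})` (so the only nonzero entries are `η^{1,μ_A} = η^{μ_A,1} = 1` and
`η^{(i,j),(i,a_i−j)} = a_i`). -/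
noncomputable def quadTerm (A : Fin 3 → ℕ) (c : Expv → ℕ → ℂ) (a b d e' : Idx)
    (β : Expv) (m : ℕ) : ℂ :=
  ∑ x ∈ Finset.HasAntidiagonal.antidiagonal β, ∑ y ∈ Finset.HasAntidiagonal.antidiagonal m,
    (der A c a b .one x.1 y.1 * der A c .mu d e' x.2 y.2
     + der A c a b .mu x.1 y.1 * der A c .one d e' x.2 y.2
     + ∑ i : Fin 3, ∑ j ∈ Finset.Icc 1 (A i - 1),
         (A i : ℂ) * der A c a b (.pt i j) x.1 y.1 * der A c (.pt i (A i - j)) d e' x.2 y.2)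

/-- `χ_A = 1/a_1 + 1/a_2 + 1/a_3 − 1`. -/
noncomputable def chi (A : Fin 3 → ℕ) : ℚ := (A 0 : ℚ)⁻¹ + (A 1 : ℚ)⁻¹ + (A 2 : ℚ)⁻¹ - 1

/-- The degree of the monomial `t^α`: `Σ_{i,j} α_{i,j}·(a_i − j)/a_i`. -/
noncomputable def deg (A : Fin 3 → ℕ) (α : Expv) : ℚ :=
  α.sum fun p n => (n : ℚ) * (((A p.1 : ℚ) - (p.2 : ℚ)) / (A p.1 : ℚ))

/-- A coefficient function is admissible if it satisfies (Homogeneity) and the WDVV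
equations (coefficientwise, in the variables `t_{i,j}` and `e^{t_{μ_A}}`). -/
structure IsAdmissible (A : Fin 3 → ℕ) (c : Expv → ℕ → ℂ) : Prop where
  homog : ∀ α : Expv, Valid A α → ∀ m : ℕ, c α m ≠ 0 → deg A α + (m : ℚ) * chi A = 2
  wdvv : ∀ a b d e' : Idx, ValidIdx A a → ValidIdx A b → ValidIdx A d → ValidIdx A e' →
      ∀ β : Expv, Valid A β → ∀ m : ℕ,
        quadTerm A c a b d e' β m = quadTerm A c a d b e' β m

/-- (Cubic values). -/
def CubicValues (A : Fin 3 → ℕ) (c : Expv → ℕ → ℂ) : Prop :=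
  (∀ (i₁ i₂ i₃ : Fin 3) (j₁ j₂ j₃ : ℕ),
      ValidPt A (i₁, j₁) → ValidPt A (i₂, j₂) → ValidPt A (i₃, j₃) →
      ¬(i₁ = i₂ ∧ i₂ = i₃) → c (e i₁ j₁ + e i₂ j₂ + e i₃ j₃) 0 = 0) ∧
  (∀ (i : Fin 3) (j₁ j₂ j₃ : ℕ),
      ValidPt A (i, j₁) → ValidPt A (i, j₂) → ValidPt A (i, j₃) →
      sFactor j₁ j₂ j₃ * c (e i j₁ + e i j₂ + e i j₃) 0 =
        if j₁ + j₂ + j₃ = A i then (A i : ℂ)⁻¹ else 0)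

/-- (Normalization). -/
def Normalization (A : Fin 3 → ℕ) (c : Expv → ℕ → ℂ) : Prop :=
  (2 ≤ A 0 → c (e 0 1 + e 1 1 + e 2 1) 1 = 1) ∧
  (A 0 = 1 → A 0 < A 1 → c (e 1 1 + e 2 1) 1 = 1) ∧
  (A 0 = 1 → A 1 = 1 → A 1 < A 2 → c (e 2 1) 1 = 1) ∧
  (A 0 = 1 → A 1 = 1 → A 2 = 1 → c 0 1 = 1)

/-- (Separation). -/
def Separation (A : Fin 3 → ℕ) (c : Expv → ℕ → ℂ) : Prop :=
  ∀ γ : Expv, Valid A γ →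
    ∀ (i₁ i₂ : Fin 3) (j₁ j₂ : ℕ), i₁ ≠ i₂ → ValidPt A (i₁, j₁) → ValidPt A (i₂, j₂) →
      e i₁ j₁ + e i₂ j₂ ≤ γ → c γ 0 = 0

/-- The automorphism of `ℤ^{μ_A−2}` exchanging `e_{i₁,j}` and `e_{i₂,j}` for all `j`. -/
def swapExp (i₁ i₂ : Fin 3) (α : Expv) : Expv :=
  Finsupp.equivMapDomain ((Equiv.swap i₁ i₂).prodCongr (Equiv.refl ℕ)) α

/-- (Symmetry). -/
def Symmetry (A : Fin 3 → ℕ) (c : Expv → ℕ → ℂ) : Prop :=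
  ∀ i₁ i₂ : Fin 3, A i₁ = A i₂ → ∀ α : Expv, Valid A α → ∀ m : ℕ,
    c (swapExp i₁ i₂ α) m = c α m



section Helpers
variable (A : Fin 3 → ℕ) (c : Expv → ℕ → ℂ)

lemma len_add (α β : Expv) : len (α + β) = len α + len β := by
  simp [len, Finsupp.sum_add_index']

lemma len_single (p : Pt) (n : ℕ) : len (Finsupp.single p n) = n := by
  simp [len, Finsupp.sum_single_index]

lemma eq_single_of_len_one {δ : Expv} (h : len δ = 1) : ∃ p, δ = Finsupp.single p 1 := by
  have hne : δ ≠ 0 := by rintro rfl; simp [len] at h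
  obtain ⟨p, hp⟩ := Finsupp.support_nonempty_iff.mpr hne
  refine ⟨p, ?_⟩
  have hsum : ∑ q ∈ δ.support, δ q = 1 := by simpa [len, Finsupp.sum] using h
  rw [← Finset.add_sum_erase _ _ hp] at hsum
  have hp' : δ p ≠ 0 := Finsupp.mem_support_iff.mp hp
  have hδp : δ p = 1 := by omega
  have hrest : ∑ q ∈ δ.support.erase p, δ q = 0 := by omega
  ext q
  rcases eq_or_ne q p with rfl | hq
  · simp [hδp]
  · have h0 : δ q = 0 := by
      by_contra h0
      exact h0 (Finset.sum_eq_zero_iff.mp hrest q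
        (Finset.mem_erase.mpr ⟨hq, Finsupp.mem_support_iff.mpr h0⟩))
    simp [h0, Finsupp.single_apply, (Ne.symm hq : ¬ p = q)]

lemma sum_antidiagonal_single_one {M : Type*} [AddCommMonoid M] (p : Pt) (f : Expv × Expv → M) :
    ∑ x ∈ Finset.HasAntidiagonal.antidiagonal (Finsupp.single p 1), f x
      = f (0, Finsupp.single p 1) + f (Finsupp.single p 1, 0) := by
  rw [Finsupp.antidiagonal_single, Finset.sum_map]
  have h1 : Finset.HasAntidiagonal.antidiagonal (1:ℕ) = {(0,1),(1,0)} := by decide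
  rw [h1]
  simp [Finsupp.single_zero]

lemma dfac_pos (β : Expv) (ps : List Pt) : 0 < dfac β ps := by
  induction ps with
  | nil => simp [dfac]
  | cons p ps ih =>
    have h1 : 0 < (β + ((ps.map fun q => (Finsupp.single q 1 : Expv)).sum)
        + Finsupp.single p 1 : Expv) p := by
      simp [Finsupp.add_apply]
    exact Nat.mul_pos h1 ih

lemma der_ppp (i1 i2 i3 : Fin 3) (j1 j2 j3 : ℕ) (β : Expv) :
    der A c (.pt i1 j1) (.pt i2 j2) (.pt i3 j3) β 0
      = (dfac β [(i1,j1),(i2,j2),(i3,j3)] : ℂ)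
        * c (β + (Finsupp.single (i1,j1) 1
            + (Finsupp.single (i2,j2) 1 + Finsupp.single (i3,j3) 1))) 0 := by
  simp [der, ptsOf, muCount]

lemma validPt_mk {A : Fin 3 → ℕ} {i : Fin 3} {j : ℕ} (h1 : 1 ≤ j) (h2 : j ≤ A i - 1) :
    ValidPt A (i, j) := ⟨h1, h2⟩

lemma validIdx_pt {A : Fin 3 → ℕ} {i : Fin 3} {j : ℕ} (h : ValidPt A (i, j)) :
    ValidIdx A (.pt i j) := h

lemma der_ptptmu (i1 i2 : Fin 3) (j1 j2 : ℕ) (β : Expv) :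
    der A c (.pt i1 j1) (.pt i2 j2) .mu β 0 = 0 := by simp [der, muCount]

lemma der_muptpt (i1 i2 : Fin 3) (j1 j2 : ℕ) (β : Expv) :
    der A c .mu (.pt i1 j1) (.pt i2 j2) β 0 = 0 := by simp [der, muCount]

lemma sFactor_ne_zero (a b c' : ℕ) : sFactor a b c' ≠ 0 := by
  unfold sFactor; split_ifs <;> norm_num

end Helpers

/-- Sub-Lemma (Step 1-(iv)). -/
theorem step1_iv (A : Fin 3 → ℕ) (hA : ∀ i, 1 ≤ A i) (hA01 : A 0 ≤ A 1) (hA12 : A 1 ≤ A 2)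
    (c : Expv → ℕ → ℂ) (hadm : IsAdmissible A c) (hcub : CubicValues A c)
    (i₁ i₂ i₃ : Fin 3) (h12 : i₁ ≠ i₂) (h13 : i₁ ≠ i₃) (h23 : i₂ ≠ i₃)
    (ha₁ : 3 ≤ A i₁) (ha₂ : A i₂ = 2)
    (γ : Expv) (hγ : Valid A γ) (hlen : len γ = 4)
    (hi₃ : ∀ j₃ : ℕ, 1 ≤ j₃ → γ (i₃, j₃) = 0)
    (j₁ : ℕ) (hj₁ : 2 ≤ j₁) (hv₁ : ValidPt A (i₁, j₁))
    (hle : e i₁ j₁ + 2 • e i₂ 1 ≤ γ) :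
    c γ 0 = 0 := by
  obtain ⟨hj₁low, hj₁high⟩ : 1 ≤ j₁ ∧ j₁ ≤ A i₁ - 1 := hv₁
  have hN1 : 1 ≤ A i₁ := hA i₁
  set δ : Expv := γ - (e i₁ j₁ + 2 • e i₂ 1) with hδdef
  have hγeq : (e i₁ j₁ + 2 • e i₂ 1) + δ = γ := add_tsub_cancel_of_le hle
  have hlenδ : len δ = 1 := by
    have h1 := len_add (e i₁ j₁ + 2 • e i₂ 1) δ
    rw [hγeq, hlen] at h1
    have hl3 : len (e i₁ j₁ + 2 • e i₂ 1) = 3 := by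
      rw [len_add]
      simp [e, len_single, Finsupp.smul_single]
    omega
  obtain ⟨p, hp⟩ := eq_single_of_len_one hlenδ
  have hδval : Valid A δ := by
    intro q hq
    apply hγ
    have h1 : δ q ≠ 0 := Finsupp.mem_support_iff.mp hq
    have h2 : δ q ≤ γ q := Finsupp.le_def.mp tsub_le_self q
    exact Finsupp.mem_support_iff.mpr (by omega)
  have hvp2 : ValidPt A (i₂, 1) := validPt_mk le_rfl (by omega)
  have hvd : ValidPt A (i₁, 1) := validPt_mk le_rfl (by omega)
  have hve : ValidPt A (i₁, j₁ - 1) := validPt_mk (by omega) (by omega)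
  have hvj₁ : ValidPt A (i₁, j₁) := validPt_mk (by omega) (by omega)
  have hW := hadm.wdvv (.pt i₂ 1) (.pt i₂ 1) (.pt i₁ 1) (.pt i₁ (j₁-1))
      (validIdx_pt hvp2) (validIdx_pt hvp2) (validIdx_pt hvd) (validIdx_pt hve) δ hδval 0
  -- expansion of quadTerm for four point-indices
  have hexp : ∀ (u1 u2 u3 u4 : Fin 3) (v1 v2 v3 v4 : ℕ),
      quadTerm A c (.pt u1 v1) (.pt u2 v2) (.pt u3 v3) (.pt u4 v4) δ 0 =
      (∑ i : Fin 3, ∑ j ∈ Finset.Icc 1 (A i - 1),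
        (A i : ℂ) * der A c (.pt u1 v1) (.pt u2 v2) (.pt i j) 0 0
          * der A c (.pt i (A i - j)) (.pt u3 v3) (.pt u4 v4) (Finsupp.single p 1) 0)
      + (∑ i : Fin 3, ∑ j ∈ Finset.Icc 1 (A i - 1),
        (A i : ℂ) * der A c (.pt u1 v1) (.pt u2 v2) (.pt i j) (Finsupp.single p 1) 0
          * der A c (.pt i (A i - j)) (.pt u3 v3) (.pt u4 v4) 0 0) := by
    intro u1 u2 u3 u4 v1 v2 v3 v4
    rw [quadTerm, hp, sum_antidiagonal_single_one]
    simp [der_ptptmu, der_muptpt]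
  -- cubic vanishing facts
  have Z1 : ∀ (i : Fin 3), ∀ j ∈ Finset.Icc 1 (A i - 1),
      c (0 + (Finsupp.single (i₂,1) 1
        + (Finsupp.single (i₂,1) 1 + Finsupp.single (i,j) 1))) 0 = 0 := by
    intro i j hj
    rw [Finset.mem_Icc] at hj
    have hvij : ValidPt A (i, j) := validPt_mk hj.1 hj.2
    rcases eq_or_ne i₂ i with rfl | hne
    · have hj1 : j = 1 := by omega
      subst hj1
      have h := hcub.2 i₂ 1 1 1 hvp2 hvp2 hvp2
      rw [if_neg (by omega)] at h
      have hc0 := (mul_eq_zero.mp h).resolve_left (sFactor_ne_zero 1 1 1)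
      simpa [e, add_assoc] using hc0
    · have h := hcub.1 i₂ i₂ i 1 1 j hvp2 hvp2 hvij (by rintro ⟨-, h'⟩; exact hne h')
      simpa [e, add_assoc] using h
  have Z2 : ∀ (i : Fin 3), ∀ j ∈ Finset.Icc 1 (A i - 1), ¬(i = i₁ ∧ j = j₁) →
      c (0 + (Finsupp.single (i, A i - j) 1
        + (Finsupp.single (i₁,1) 1 + Finsupp.single (i₁,j₁-1) 1))) 0 = 0 := by
    intro i j hj hne
    rw [Finset.mem_Icc] at hj
    have hAi := hA i
    have hvij : ValidPt A (i, A i - j) := validPt_mk (by omega) (by omega)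
    rcases eq_or_ne i₁ i with rfl | hni
    · have hjne : j ≠ j₁ := by tauto
      have h := hcub.2 i₁ (A i₁ - j) 1 (j₁ - 1) hvij hvd hve
      rw [if_neg (by omega)] at h
      have hc0 := (mul_eq_zero.mp h).resolve_left (sFactor_ne_zero _ _ _)
      simpa [e, add_assoc] using hc0
    · have h := hcub.1 i i₁ i₁ (A i - j) 1 (j₁ - 1) hvij hvd hve
        (by rintro ⟨h', -⟩; exact hni h'.symm)
      simpa [e, add_assoc] using h
  have Z3 : ∀ (i : Fin 3), ∀ j ∈ Finset.Icc 1 (A i - 1),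
      c (0 + (Finsupp.single (i₂,1) 1
        + (Finsupp.single (i₁,1) 1 + Finsupp.single (i,j) 1))) 0 = 0 := by
    intro i j hj
    rw [Finset.mem_Icc] at hj
    have hvij : ValidPt A (i, j) := validPt_mk hj.1 hj.2
    have h := hcub.1 i₂ i₁ i 1 1 j hvp2 hvd hvij (by rintro ⟨h', -⟩; exact h12 h'.symm)
    simpa [e, add_assoc] using h
  have Z4 : ∀ (i : Fin 3), ∀ j ∈ Finset.Icc 1 (A i - 1),
      c (0 + (Finsupp.single (i, A i - j) 1
        + (Finsupp.single (i₂,1) 1 + Finsupp.single (i₁,j₁-1) 1))) 0 = 0 := by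
    intro i j hj
    rw [Finset.mem_Icc] at hj
    have hAi := hA i
    have hvij : ValidPt A (i, A i - j) := validPt_mk (by omega) (by omega)
    have h := hcub.1 i i₂ i₁ (A i - j) 1 (j₁ - 1) hvij hvp2 hve
      (by rintro ⟨-, h'⟩; exact h12 h'.symm)
    simpa [e, add_assoc] using h
  -- the right-hand side of WDVV vanishes
  have hR0 : quadTerm A c (.pt i₂ 1) (.pt i₁ 1) (.pt i₂ 1) (.pt i₁ (j₁-1)) δ 0 = 0 := by
    rw [hexp]
    have s1 : (∑ i : Fin 3, ∑ j ∈ Finset.Icc 1 (A i - 1),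
        (A i : ℂ) * der A c (.pt i₂ 1) (.pt i₁ 1) (.pt i j) 0 0
          * der A c (.pt i (A i - j)) (.pt i₂ 1) (.pt i₁ (j₁-1)) (Finsupp.single p 1) 0) = 0 := by
      refine Finset.sum_eq_zero fun i _ => Finset.sum_eq_zero fun j hj => ?_
      rw [der_ppp A c i₂ i₁ i 1 1 j 0, Z3 i j hj]
      ring
    have s2 : (∑ i : Fin 3, ∑ j ∈ Finset.Icc 1 (A i - 1),
        (A i : ℂ) * der A c (.pt i₂ 1) (.pt i₁ 1) (.pt i j) (Finsupp.single p 1) 0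
          * der A c (.pt i (A i - j)) (.pt i₂ 1) (.pt i₁ (j₁-1)) 0 0) = 0 := by
      refine Finset.sum_eq_zero fun i _ => Finset.sum_eq_zero fun j hj => ?_
      rw [der_ppp A c i i₂ i₁ (A i - j) 1 (j₁-1) 0, Z4 i j hj]
      ring
    rw [s1, s2, add_zero]
  -- the left-hand side of WDVV
  have harg : Finsupp.single p 1 + (Finsupp.single (i₂,1) 1
      + (Finsupp.single (i₂,1) 1 + Finsupp.single (i₁,j₁) 1)) = γ := by
    rw [← hγeq, hp]
    simp only [e, two_smul]
    abel
  have hL : quadTerm A c (.pt i₂ 1) (.pt i₂ 1) (.pt i₁ 1) (.pt i₁ (j₁-1)) δ 0 =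
      (A i₁ : ℂ) * ((dfac (Finsupp.single p 1) [(i₂,1),(i₂,1),(i₁,j₁)] : ℂ) * c γ 0)
        * ((dfac 0 [(i₁, A i₁ - j₁),(i₁,1),(i₁,j₁-1)] : ℂ)
          * c (0 + (Finsupp.single (i₁, A i₁ - j₁) 1
            + (Finsupp.single (i₁,1) 1 + Finsupp.single (i₁,j₁-1) 1))) 0) := by
    rw [hexp]
    have s1 : (∑ i : Fin 3, ∑ j ∈ Finset.Icc 1 (A i - 1),
        (A i : ℂ) * der A c (.pt i₂ 1) (.pt i₂ 1) (.pt i j) 0 0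
          * der A c (.pt i (A i - j)) (.pt i₁ 1) (.pt i₁ (j₁-1)) (Finsupp.single p 1) 0) = 0 := by
      refine Finset.sum_eq_zero fun i _ => Finset.sum_eq_zero fun j hj => ?_
      rw [der_ppp A c i₂ i₂ i 1 1 j 0, Z1 i j hj]
      ring
    rw [s1, zero_add]
    rw [Finset.sum_eq_single_of_mem i₁ (Finset.mem_univ _) ?hzero]
    case hzero =>
      intro i _ hne
      refine Finset.sum_eq_zero fun j hj => ?_
      rw [der_ppp A c i i₁ i₁ (A i - j) 1 (j₁-1) 0, Z2 i j hj (by tauto)]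
      ring
    rw [Finset.sum_eq_single_of_mem j₁ (Finset.mem_Icc.mpr ⟨by omega, by omega⟩) ?hz2]
    case hz2 =>
      intro j hj hne
      rw [der_ppp A c i₁ i₁ i₁ (A i₁ - j) 1 (j₁-1) 0, Z2 i₁ j hj (by tauto)]
      ring
    rw [der_ppp A c i₂ i₂ i₁ 1 1 j₁ (Finsupp.single p 1),
        der_ppp A c i₁ i₁ i₁ (A i₁ - j₁) 1 (j₁-1) 0, harg]
  -- nonvanishing of the cubic coefficient
  have hAne : (A i₁ : ℂ) ≠ 0 := Nat.cast_ne_zero.mpr (by omega)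
  have hCval := hcub.2 i₁ (A i₁ - j₁) 1 (j₁ - 1)
      (validPt_mk (by omega) (by omega)) hvd hve
  rw [if_pos (by omega)] at hCval
  have hCne : c (0 + (Finsupp.single (i₁, A i₁ - j₁) 1
      + (Finsupp.single (i₁,1) 1 + Finsupp.single (i₁,j₁-1) 1))) 0 ≠ 0 := by
    intro h0
    rw [show (e i₁ (A i₁ - j₁) + e i₁ 1 + e i₁ (j₁-1) : Expv)
        = 0 + (Finsupp.single (i₁, A i₁ - j₁) 1
          + (Finsupp.single (i₁,1) 1 + Finsupp.single (i₁,j₁-1) 1)) from by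
          simp [e, add_assoc]] at hCval
    rw [h0, mul_zero] at hCval
    exact (inv_ne_zero hAne) hCval.symm
  have h0 : (A i₁ : ℂ) * ((dfac (Finsupp.single p 1) [(i₂,1),(i₂,1),(i₁,j₁)] : ℂ) * c γ 0)
      * ((dfac 0 [(i₁, A i₁ - j₁),(i₁,1),(i₁,j₁-1)] : ℂ)
        * c (0 + (Finsupp.single (i₁, A i₁ - j₁) 1
          + (Finsupp.single (i₁,1) 1 + Finsupp.single (i₁,j₁-1) 1))) 0) = 0 := by
    rw [← hL, hW, hR0]
  have hD : (dfac (Finsupp.single p 1) [(i₂,1),(i₂,1),(i₁,j₁)] : ℂ) ≠ 0 :=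
    Nat.cast_ne_zero.mpr (dfac_pos _ _).ne'
  have hE : (dfac 0 [(i₁, A i₁ - j₁),(i₁,1),(i₁,j₁-1)] : ℂ) ≠ 0 :=
    Nat.cast_ne_zero.mpr (dfac_pos _ _).ne'
  rcases mul_eq_zero.mp h0 with h | h
  · rcases mul_eq_zero.mp h with h | h
    · exact absurd h hAne
    · rcases mul_eq_zero.mp h with h | h
      · exact absurd h hD
      · exact h
  · rcases mul_eq_zero.mp h with h | h
    · exact absurd h hE
    · exact absurd h hCne
end FrobeniusUniqueness
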